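/- For n ≥ 2, the arithmetic mean based map d : ℝⁿ → ℝ≥0 defined by d(x₁,…,xₙ) = (1/n)·∑_{i=1}^n xᵢ − min{x₁,…,xₙ} is an n-distance on ℝ and satisfies d(x₁,…,xₙ) ≤ (1/(n-1))·∑_{i=1}^n d(x₁,…,xₙ)ᵢᶻ for all x₁,…,xₙ,z ∈ ℝ. -/

import Mathlib

open Finset Function

/-- `d` is an `n`-distance: nonnegative, vanishing exactly on constant tuples,
symmetric, and satisfying the simplex inequality. -/
structure IsNDistance {X : Type*} {n : ℕ} (d : (Fin n → X) → ℝ) : Prop where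
  nonneg : ∀ x, 0 ≤ d x
  eq_zero_iff : ∀ x, d x = 0 ↔ ∀ i j : Fin n, x i = x j
  symm : ∀ (x : Fin n → X) (σ : Equiv.Perm (Fin n)), d (x ∘ σ) = d x
  simplex : ∀ (x : Fin n → X) (z : X), d x ≤ ∑ i, d (Function.update x i z)

/-- The arithmetic mean based map is a standard $n$-distance on $ℝ$. -/
theorem arithMean_isStandardNDistance {n : ℕ} (hn : 2 ≤ n) (d : (Fin n → ℝ) → ℝ)
    (hdef : d = fun x : Fin n → ℝ => (∑ i, x i) / n - ⨅ i, x i) :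
    IsNDistance d ∧
    ∀ (x : Fin n → ℝ) (z : ℝ),
      d x ≤ (1 / ((n : ℝ) - 1)) * ∑ i, d (Function.update x i z) := by
  subst hdef
  haveI : Nonempty (Fin n) := ⟨⟨0, by omega⟩⟩
  have hnpos : (0:ℝ) < n := by exact_mod_cast Nat.lt_of_lt_of_le (by norm_num) hn
  have hn1pos : (0:ℝ) < (n:ℝ) - 1 := by
    have : (2:ℝ) ≤ n := by exact_mod_cast hn
    linarith
  have hbdd : ∀ f : Fin n → ℝ, BddBelow (Set.range f) := fun f => (Set.finite_range f).bddBelow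
  have hinf_le : ∀ (f : Fin n → ℝ) i, (⨅ j, f j) ≤ f i := fun f i => ciInf_le (hbdd f) i
  have hmin : ∀ f : Fin n → ℝ, ∃ i₀, (∀ j, f i₀ ≤ f j) ∧ f i₀ = ⨅ j, f j := by
    intro f
    obtain ⟨i₀, hi₀⟩ := Finite.exists_min f
    exact ⟨i₀, hi₀, le_antisymm (le_ciInf hi₀) (hinf_le f i₀)⟩
  -- nonnegativity
  have hnonneg : ∀ f : Fin n → ℝ, 0 ≤ (∑ i, f i) / n - ⨅ i, f i := by
    intro f
    have h1 : (n:ℝ) * (⨅ i, f i) ≤ ∑ i, f i := by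
      calc (n:ℝ) * (⨅ i, f i) = ∑ _i : Fin n, (⨅ i, f i) := by
            simp [Finset.sum_const, mul_comm]
        _ ≤ ∑ i, f i := Finset.sum_le_sum fun i _ => hinf_le f i
    have : (⨅ i, f i) ≤ (∑ i, f i) / n := by
      rw [le_div_iff₀ hnpos]; linarith
    linarith
  -- the key (strong) inequality
  have key : ∀ (x : Fin n → ℝ) (z : ℝ),
      (∑ i, x i) / n - ⨅ i, x i ≤
        (1 / ((n : ℝ) - 1)) *
          ∑ i, ((∑ j, Function.update x i z j) / n - ⨅ j, Function.update x i z j) := by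
    intro x z
    obtain ⟨i₀, hi₀, hi₀eq⟩ := hmin x
    set S := ∑ i, x i with hS
    set m : Fin n → ℝ := fun i => ⨅ j, Function.update x i z j with hm
    -- bound on the sum of the m i
    have hT : ∑ i, m i ≤ z + ((n:ℝ) - 1) * x i₀ := by
      have hsplit : ∑ i, m i = m i₀ + ∑ i ∈ univ.erase i₀, m i :=
        (Finset.add_sum_erase univ m (mem_univ i₀)).symm
      have h1 : m i₀ ≤ z := by
        have := hinf_le (Function.update x i₀ z) i₀
        simpa using this
      have h2 : ∑ i ∈ univ.erase i₀, m i ≤ ((n:ℝ) - 1) * x i₀ := by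
        have hle : ∀ i ∈ univ.erase i₀, m i ≤ x i₀ := by
          intro i hi
          have hne : i ≠ i₀ := (Finset.mem_erase.mp hi).1
          have := hinf_le (Function.update x i z) i₀
          simpa [Function.update_of_ne (Ne.symm hne)] using this
        have := Finset.sum_le_card_nsmul (univ.erase i₀) m (x i₀) hle
        have hcard : (univ.erase i₀).card = n - 1 := by
          simp [Finset.card_erase_of_mem]
        rw [hcard] at this
        have hcast : ((n - 1 : ℕ) : ℝ) = (n:ℝ) - 1 := by
          have : (1:ℕ) ≤ n := by omega
          push_cast [this]; ring
        calc ∑ i ∈ univ.erase i₀, m i ≤ (n - 1 : ℕ) • x i₀ := this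
          _ = ((n - 1 : ℕ) : ℝ) * x i₀ := by simp [nsmul_eq_mul]
          _ = ((n:ℝ) - 1) * x i₀ := by rw [hcast]
      linarith [hsplit ▸ add_le_add h1 h2]
    -- compute the sums
    have hsum : ∀ i, ∑ j, Function.update x i z j = S - x i + z := by
      intro i
      rw [Finset.sum_update_of_mem (mem_univ i),
        Finset.sum_sdiff_eq_sub (Finset.subset_univ _), Finset.sum_singleton]
      ring
    have hrhs : ∑ i, ((∑ j, Function.update x i z j) / n - m i)
        = (((n:ℝ) - 1) * S + (n:ℝ) * z) / n - ∑ i, m i := by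
      rw [Finset.sum_sub_distrib, ← Finset.sum_div]
      congr 2
      calc ∑ i, ∑ j, Function.update x i z j = ∑ i, (S - x i + z) := by
            exact Finset.sum_congr rfl fun i _ => hsum i
        _ = (n:ℝ) * S - S + (n:ℝ) * z := by
            rw [Finset.sum_add_distrib, Finset.sum_sub_distrib]
            simp [Finset.sum_const, Finset.card_univ, mul_comm, hS]
        _ = ((n:ℝ) - 1) * S + (n:ℝ) * z := by ring
    rw [hrhs, ← hi₀eq]
    have he : (((n:ℝ) - 1) * S + (n:ℝ) * z) / n = ((n:ℝ) - 1) * (S / n) + z := by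
      field_simp
    rw [he, one_div, inv_mul_eq_div, le_div_iff₀ hn1pos]
    nlinarith [hT]
  -- nonnegativity of the RHS sum
  have hsum_nonneg : ∀ (x : Fin n → ℝ) (z : ℝ),
      0 ≤ ∑ i, ((∑ j, Function.update x i z j) / n - ⨅ j, Function.update x i z j) :=
    fun x z => Finset.sum_nonneg fun i _ => hnonneg _
  refine ⟨⟨fun x => hnonneg x, ?_, ?_, ?_⟩, fun x z => key x z⟩
  · -- eq_zero_iff
    intro x
    constructor
    · intro h i j
      have hsum : ∑ k, x k = (n:ℝ) * (⨅ k, x k) := by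
        have : (∑ k, x k) / n = ⨅ k, x k := by linarith [h]
        field_simp at this
        linarith [this]
      have hz : ∑ k, (x k - ⨅ l, x l) = 0 := by
        rw [Finset.sum_sub_distrib, hsum]
        simp [Finset.sum_const, Finset.card_univ, mul_comm]
      have hall : ∀ k ∈ univ, x k - (⨅ l, x l) = 0 := by
        intro k _
        exact (Finset.sum_eq_zero_iff_of_nonneg
          (fun k _ => sub_nonneg.mpr (hinf_le x k))).mp hz k (mem_univ k)
      have hi := hall i (mem_univ i)
      have hj := hall j (mem_univ j)
      linarith
    · intro h
      obtain ⟨i₀, hi₀, hi₀eq⟩ := hmin x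
      have hconst : ∀ k, x k = x i₀ := fun k => h k i₀
      have h1 : ∑ k, x k = (n:ℝ) * x i₀ := by
        rw [Finset.sum_congr rfl fun k _ => hconst k]
        simp [Finset.sum_const, Finset.card_univ, mul_comm]
      rw [h1, ← hi₀eq]
      field_simp
      ring
  · -- symmetry
    intro x σ
    have h1 : ∑ i, (x ∘ σ) i = ∑ i, x i := Fintype.sum_bijective σ σ.bijective _ _ (fun i => rfl)
    have h2 : (⨅ i, (x ∘ σ) i) = ⨅ i, x i := σ.surjective.iInf_comp x
    simp only [h1, h2]
  · -- simplex inequality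
    intro x z
    calc (∑ i, x i) / n - ⨅ i, x i
        ≤ (1 / ((n : ℝ) - 1)) *
            ∑ i, ((∑ j, Function.update x i z j) / n - ⨅ j, Function.update x i z j) :=
          key x z
      _ ≤ 1 * ∑ i, ((∑ j, Function.update x i z j) / n - ⨅ j, Function.update x i z j) := by
          apply mul_le_mul_of_nonneg_right _ (hsum_nonneg x z)
          rw [div_le_one hn1pos]
          have : (2:ℝ) ≤ n := by exact_mod_cast hn
          linarith
      _ = _ := one_mul _
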